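/- Assume T ≠ ∅ and define K* := {w ∈ ℝ^{q+1} : ∃u ∈ ℝ^{m+r+1}, u ≥ 0, w = −Hᵀu, Gᵀu = 0}. Then K* = cl(cone(M[𝒟 × {1}])), where M[𝒟 × {1}] = {M(d,1) : d ∈ 𝒟}. -/

import Mathlib

open Matrix Set Pointwise

noncomputable section

/-- `cone B = {l • x : l ≥ 0, x ∈ conv B}` -/
def coneOf {E : Type*} [AddCommGroup E] [Module ℝ E] (B : Set E) : Set E :=
  {y | ∃ l : ℝ, 0 ≤ l ∧ ∃ x ∈ convexHull ℝ B, y = l • x}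

/-- `F` is a face of the convex set `B`. -/
def IsFaceOf {E : Type*} [AddCommGroup E] [Module ℝ E] (F B : Set E) : Prop :=
  Convex ℝ F ∧ F ⊆ B ∧
    ∀ y ∈ B, ∀ z ∈ B, ∀ l : ℝ, 0 < l → l < 1 → l • y + (1 - l) • z ∈ F → y ∈ F ∧ z ∈ F

/-- recession cone `0⁺B` of a convex set. -/
def recCone {E : Type*} [AddCommGroup E] [Module ℝ E] (B : Set E) : Set E :=
  {d | ∀ x ∈ B, ∀ t : ℝ, 0 ≤ t → x + t • d ∈ B}

/-- lineality space `L(B) = 0⁺B ∩ (−0⁺B)`. -/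
def linealOf {E : Type*} [AddCommGroup E] [Module ℝ E] (B : Set E) : Set E :=
  recCone B ∩ -recCone B

/-- dimension of (the affine hull of) a set. -/
def sdim {E : Type*} [AddCommGroup E] [Module ℝ E] (B : Set E) : ℕ :=
  Module.finrank ℝ (vectorSpan ℝ B)

def IsPolyhedron {d : ℕ} (B : Set (Fin d → ℝ)) : Prop :=
  ∃ (k : ℕ) (W : Matrix (Fin k) (Fin d) ℝ) (v : Fin k → ℝ), B = {x | v ≤ W.mulVec x}

/-- orthogonal complement (as a set) of a set of vectors. -/
def orthSet {d : ℕ} (L : Set (Fin d → ℝ)) : Set (Fin d → ℝ) :=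
  {y | ∀ z ∈ L, y ⬝ᵥ z = 0}

/-- polar cone `K° = {w : ∀ y ∈ K, wᵀy ≤ 0}`. -/
def polarCone {d : ℕ} (K : Set (Fin d → ℝ)) : Set (Fin d → ℝ) :=
  {w | ∀ y ∈ K, w ⬝ᵥ y ≤ 0}

/-- the last index of `Fin q` (1-based index `q`). -/
def lastIdx (q : ℕ) (hq : 0 < q) : Fin q := ⟨q - 1, by omega⟩

/-- `y ↦ (y,1)`. -/
def lift1 {q : ℕ} (y : Fin q → ℝ) : Fin (q + 1) → ℝ := Fin.snoc y 1

/-- `y ↦ (y,0)`. -/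
def lift0 {q : ℕ} (y : Fin q → ℝ) : Fin (q + 1) → ℝ := Fin.snoc y 0

/-- `p(y) = (y₁,…,y_q)`. -/
def projq {q : ℕ} (y : Fin (q + 1) → ℝ) : Fin q → ℝ := fun i => y i.castSucc

/-- `Φ(B) = cl cone (B × {1})`. -/
def PhiMap {q : ℕ} (B : Set (Fin q → ℝ)) : Set (Fin (q + 1) → ℝ) :=
  closure (coneOf (lift1 '' B))

/-- the block matrix `G = (A; −ZᵀP; 0)`. -/
def Gmat {m n q r : ℕ} (A : Matrix (Fin m) (Fin n) ℝ) (P : Matrix (Fin q) (Fin n) ℝ)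
    (Z : Matrix (Fin q) (Fin r) ℝ) : Matrix (Fin (m + r + 1)) (Fin n) ℝ :=
  fun i j =>
    if h : (i : ℕ) < m then A ⟨i, h⟩ j
    else if h2 : (i : ℕ) < m + r then -(∑ l : Fin q, Z l ⟨(i : ℕ) - m, by omega⟩ * P l j)
    else 0

/-- the block matrix `H` with rows `(0, −b)`, `(Zᵀ, 0)` and `(0,…,0,1)`. -/
def Hmat {m q r : ℕ} (b : Fin m → ℝ) (Z : Matrix (Fin q) (Fin r) ℝ) :
    Matrix (Fin (m + r + 1)) (Fin (q + 1)) ℝ :=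
  fun i j =>
    if h : (i : ℕ) < m then (if (j : ℕ) = q then -b ⟨i, h⟩ else 0)
    else if h2 : (i : ℕ) < m + r then
      (if hj : (j : ℕ) < q then Z ⟨j, hj⟩ ⟨(i : ℕ) - m, by omega⟩ else 0)
    else (if (j : ℕ) = q then 1 else 0)

/-- dual objective `D(u,w) = (w₁,…,w_{q−1}, bᵀu)`. -/
def Dmap {m q : ℕ} (b : Fin m → ℝ) (uw : (Fin m → ℝ) × (Fin q → ℝ)) : Fin q → ℝ :=
  fun i => if (i : ℕ) < q - 1 then uw.2 i else b ⬝ᵥ uw.1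

/-- `R* = {v : v₁ = ⋯ = v_{q−1} = 0, v_q ≥ 0}`. -/
def RstarSet (q : ℕ) (hq : 0 < q) : Set (Fin q → ℝ) :=
  {v | (∀ i : Fin q, (i : ℕ) < q - 1 → v i = 0) ∧ 0 ≤ v (lastIdx q hq)}

/-- dual feasible set `T`. -/
def Tset {m n q r : ℕ} (A : Matrix (Fin m) (Fin n) ℝ) (P : Matrix (Fin q) (Fin n) ℝ)
    (Z : Matrix (Fin q) (Fin r) ℝ) (cbar : Fin q → ℝ) :
    Set ((Fin m → ℝ) × (Fin q → ℝ)) :=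
  {uw | ∃ v : Fin r → ℝ, 0 ≤ v ∧ uw.2 = Z.mulVec v ∧
    Aᵀ.mulVec uw.1 = Pᵀ.mulVec uw.2 ∧ cbar ⬝ᵥ uw.2 = 1 ∧ 0 ≤ uw.1}

/-- `φ(y,w) = Σ_{i<q} y_i w_i + y_q (1 − Σ_{i<q} c̄_i w_i) − w_q`. -/
def phiFn {q : ℕ} (hq : 0 < q) (cbar : Fin q → ℝ) (y w : Fin q → ℝ) : ℝ :=
  (∑ i : Fin q, if (i : ℕ) < q - 1 then y i * w i else 0)
    + y (lastIdx q hq) * (1 - ∑ i : Fin q, if (i : ℕ) < q - 1 then cbar i * w i else 0)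
    - w (lastIdx q hq)

/-- duality map `Ψ(F*) = ⋂_{w ∈ F*} {y ∈ Pset : φ(y,w) = 0}`. -/
def PsiMap {q : ℕ} (hq : 0 < q) (cbar : Fin q → ℝ) (Pset : Set (Fin q → ℝ))
    (Fstar : Set (Fin q → ℝ)) : Set (Fin q → ℝ) :=
  ⋂ w ∈ Fstar, {y ∈ Pset | phiFn hq cbar y w = 0}

/-- `My = (−y₁,…,−y_{q−1}, c̄₁y₁+⋯+c̄_{q−1}y_{q−1} − y_{q+1}, y_q)`. -/
def Mmap {q : ℕ} (hq : 0 < q) (cbar : Fin q → ℝ) (y : Fin (q + 1) → ℝ) : Fin (q + 1) → ℝ :=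
  fun i =>
    if (i : ℕ) < q - 1 then -y i
    else if (i : ℕ) = q - 1 then
      (∑ j : Fin q, if (j : ℕ) < q - 1 then cbar j * y j.castSucc else 0) - y (Fin.last q)
    else y ((lastIdx q hq).castSucc)

/-- `M⁻¹w = (−w₁,…,−w_{q−1}, w_{q+1}, −cᵀw)` where `c = (c̄,0)`. -/
def MinvMap {q : ℕ} (cbar : Fin q → ℝ) (w : Fin (q + 1) → ℝ) : Fin (q + 1) → ℝ :=
  fun i =>
    if (i : ℕ) < q - 1 then -w i
    else if (i : ℕ) = q - 1 then w (Fin.last q)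
    else -((Fin.snoc cbar 0 : Fin (q + 1) → ℝ) ⬝ᵥ w)

/-- `p*(w) = (w₁,…,w_{q−1},w_{q+1})`. -/
def pstarMap {q : ℕ} (w : Fin (q + 1) → ℝ) : Fin q → ℝ :=
  fun i => if (i : ℕ) < q - 1 then w i.castSucc else w (Fin.last q)

/-- `y` generates an extreme ray of the pointed convex cone `Q`. -/
def IsExtremeDir {E : Type*} [AddCommGroup E] [Module ℝ E] (Q : Set E) (y : E) : Prop :=
  y ∈ Q ∧ y ≠ 0 ∧ IsFaceOf (coneOf {y}) Q

/-- `σ(u,w) = (u¹, −p(w))` where `u = (u¹,u²,u³) ∈ ℝ^m×ℝ^r×ℝ`. -/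
def sigmaMap {m q r : ℕ} (uw : (Fin (m + r + 1) → ℝ) × (Fin (q + 1) → ℝ)) :
    (Fin m → ℝ) × (Fin q → ℝ) :=
  (fun i => uw.1 (Fin.castLE (by omega) i), -projq uw.2)

/-! ### Auxiliary lemmas -/

section AuxClosed

open Finset in
/-- Conic Carathéodory. -/
lemma cone_caratheodory {k N : ℕ} (M : Matrix (Fin k) (Fin N) ℝ) (s : Finset (Fin N)) :
    ∀ u : Fin N → ℝ, 0 ≤ u → (∀ j ∉ s, u j = 0) →
    ∃ t : Finset (Fin N), LinearIndependent ℝ (fun j : t => (Mᵀ (j : Fin N))) ∧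
      ∃ v : Fin N → ℝ, 0 ≤ v ∧ (∀ j ∉ t, v j = 0) ∧ M.mulVec v = M.mulVec u := by
  induction s using Finset.strongInduction with
  | _ s ih =>
    intro u hu hsupp
    by_cases hli : LinearIndependent ℝ (fun j : s => (Mᵀ (j : Fin N)))
    · exact ⟨s, hli, u, hu, hsupp, rfl⟩
    · obtain ⟨g, hgsum, i₀, hgi₀⟩ := Fintype.not_linearIndependent_iff.mp hli
      set G : Fin N → ℝ := fun j => if h : j ∈ s then g ⟨j, h⟩ else 0 with hG
      have hGsupp : ∀ j ∉ s, G j = 0 := fun j hj => by simp [hG, hj]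
      have hGsum : ∑ j : Fin N, G j • Mᵀ j = 0 := by
        rw [← Finset.sum_subset (Finset.subset_univ s)
          (fun j _ hj => by simp [hGsupp j hj])]
        rw [← Finset.sum_attach s (fun j => G j • Mᵀ j)]
        simpa [hG] using hgsum
      have hGne : G (i₀ : Fin N) ≠ 0 := by simp [hG, i₀.2, hgi₀]
      obtain ⟨G, hGsupp, hGsum, j₁, hGj₁⟩ :
          ∃ G : Fin N → ℝ, (∀ j ∉ s, G j = 0) ∧ (∑ j : Fin N, G j • Mᵀ j = 0) ∧
            ∃ j₁, 0 < G j₁ := by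
        rcases lt_or_ge 0 (G (i₀ : Fin N)) with h | h
        · exact ⟨G, hGsupp, hGsum, _, h⟩
        · refine ⟨-G, fun j hj => by simp [hGsupp j hj], by simp [hGsum], (i₀ : Fin N), ?_⟩
          simp only [Pi.neg_apply, neg_pos]
          exact lt_of_le_of_ne h hGne
      have hj₁s : j₁ ∈ s := by
        by_contra h; rw [hGsupp j₁ h] at hGj₁; exact lt_irrefl 0 hGj₁
      have hFne : (s.filter (fun j => 0 < G j)).Nonempty :=
        ⟨j₁, Finset.mem_filter.mpr ⟨hj₁s, hGj₁⟩⟩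
      obtain ⟨j₀, hj₀mem, hj₀min⟩ :=
        Finset.exists_min_image (s.filter (fun j => 0 < G j)) (fun j => u j / G j) hFne
      rw [Finset.mem_filter] at hj₀mem
      obtain ⟨hj₀s, hGj₀⟩ := hj₀mem
      set τ := u j₀ / G j₀ with hτ
      have hτ0 : 0 ≤ τ := div_nonneg (hu j₀) hGj₀.le
      set v : Fin N → ℝ := fun j => u j - τ * G j with hv
      have hv0 : 0 ≤ v := by
        intro j
        rcases lt_or_ge 0 (G j) with h | h
        · have hjs : j ∈ s := by
            by_contra hc; rw [hGsupp j hc] at h; exact lt_irrefl 0 h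
          have h1 := hj₀min j (Finset.mem_filter.mpr ⟨hjs, h⟩)
          have h2 : τ * G j ≤ u j := by rw [← le_div_iff₀ h]; exact h1
          simpa [hv] using sub_nonneg.mpr h2
        · exact sub_nonneg.mpr (le_trans (mul_nonpos_of_nonneg_of_nonpos hτ0 h) (hu j))
      have hvsupp : ∀ j ∉ s.erase j₀, v j = 0 := by
        intro j hj
        by_cases hjj : j = j₀
        · subst hjj
          simp [hv, hτ, div_mul_cancel₀ _ hGj₀.ne']
        · have hjs : j ∉ s := fun hs => hj (Finset.mem_erase.mpr ⟨hjj, hs⟩)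
          simp [hv, hsupp j hjs, hGsupp j hjs]
      have hMG : M.mulVec G = 0 := by
        funext i
        have := congrFun hGsum i
        simpa [Matrix.mulVec, dotProduct, Finset.sum_apply, mul_comm] using this
      have hveq : v = u - τ • G := by funext j; simp [hv]
      have hMveq : M.mulVec v = M.mulVec u := by
        rw [hveq, Matrix.mulVec_sub, Matrix.mulVec_smul, hMG, smul_zero, sub_zero]
      obtain ⟨t, hti, w, hw0, hwsupp, hweq⟩ :=
        ih (s.erase j₀) (Finset.erase_ssubset hj₀s) v hv0 hvsupp
      exact ⟨t, hti, w, hw0, hwsupp, hweq.trans hMveq⟩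

/-- The image of the nonnegative orthant under `mulVec` is closed. -/
lemma isClosed_mulVec_orthant {k N : ℕ} (M : Matrix (Fin k) (Fin N) ℝ) :
    IsClosed {y : Fin k → ℝ | ∃ u, 0 ≤ u ∧ y = M.mulVec u} := by
  have main : {y : Fin k → ℝ | ∃ u, 0 ≤ u ∧ y = M.mulVec u} =
      ⋃ (t : {t : Finset (Fin N) // LinearIndependent ℝ (fun j : t => (Mᵀ (j : Fin N)))}),
        (fun c : ({x // x ∈ t.1} → ℝ) => ∑ j : {x // x ∈ t.1}, c j • Mᵀ (j : Fin N)) ''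
          {c | 0 ≤ c} := by
    ext y
    simp only [Set.mem_setOf_eq, Set.mem_iUnion, Set.mem_image]
    constructor
    · rintro ⟨u, hu, rfl⟩
      obtain ⟨t, hti, v, hv0, hvsupp, hveq⟩ :=
        cone_caratheodory M Finset.univ u hu (fun j hj => absurd (Finset.mem_univ j) hj)
      refine ⟨⟨t, hti⟩, fun j => v j.1, fun j => hv0 j.1, ?_⟩
      rw [← hveq]
      funext i
      rw [Finset.sum_apply]
      simp only [Pi.smul_apply, transpose_apply, smul_eq_mul]
      rw [Matrix.mulVec, dotProduct]
      rw [← Finset.sum_subset (Finset.subset_univ t)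
        (fun j _ hj => by simp [hvsupp j hj])]
      rw [← Finset.sum_attach t (fun j => M i j * v j)]
      exact Finset.sum_congr rfl (fun j _ => mul_comm _ _)
    · rintro ⟨t, c, hc, rfl⟩
      set u : Fin N → ℝ := fun j => if h : j ∈ t.1 then c ⟨j, h⟩ else 0 with hu
      refine ⟨u, fun j => ?_, ?_⟩
      · by_cases h : j ∈ t.1
        · simpa [hu, h] using hc ⟨j, h⟩
        · simp [hu, h]
      funext i
      rw [Finset.sum_apply, Matrix.mulVec, dotProduct]
      rw [← Finset.sum_subset (Finset.subset_univ t.1)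
        (fun j _ hj => by simp [hu, hj])]
      rw [← Finset.sum_attach t.1 (fun j => M i j * u j)]
      refine Finset.sum_congr rfl (fun j _ => ?_)
      simp only [Pi.smul_apply, transpose_apply, smul_eq_mul, hu, j.2, dif_pos]
      exact (mul_comm _ _).symm
  rw [main]
  apply isClosed_iUnion_of_finite
  rintro ⟨t, hti⟩
  set φ : ({x // x ∈ t} → ℝ) →ₗ[ℝ] (Fin k → ℝ) :=
    { toFun := fun c => ∑ j : {x // x ∈ t}, c j • Mᵀ (j : Fin N)
      map_add' := by intro a b; simp [add_smul, Finset.sum_add_distrib]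
      map_smul' := by intro a b; simp [smul_smul, Finset.smul_sum] } with hφ
  have hker : LinearMap.ker φ = ⊥ := by
    rw [LinearMap.ker_eq_bot']
    intro c hc
    have := Fintype.linearIndependent_iff.mp hti c hc
    funext j
    exact this j
  have hemb := LinearMap.isClosedEmbedding_of_injective (f := φ) hker
  have horth : IsClosed {c : ({x // x ∈ t} → ℝ) | 0 ≤ c} := by
    have : {c : ({x // x ∈ t} → ℝ) | 0 ≤ c} = ⋂ j, {c | 0 ≤ c j} := by
      ext c; simp [Pi.le_def]
    rw [this]
    exact isClosed_iInter fun j => isClosed_le continuous_const (continuous_apply j)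
  exact hemb.isClosedMap _ horth

end AuxClosed

section AuxBlocks

lemma snoc_eval {d : ℕ} (x : Fin d → ℝ) (y : ℝ) (i : Fin (d+1)) (h : (i : ℕ) < d) :
    (Fin.snoc x y : Fin (d+1) → ℝ) i = x ⟨i, h⟩ := by
  simp only [Fin.snoc, dif_pos h, cast_eq]
  rfl

lemma eq_last_of_not_lt {d : ℕ} (i : Fin (d+1)) (h : ¬ (i : ℕ) < d) : i = Fin.last d := by
  ext; have := i.isLt; simp only [Fin.val_last]; omega

lemma smul_snoc {d : ℕ} (a : ℝ) (x : Fin d → ℝ) (y : ℝ) :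
    a • (Fin.snoc x y : Fin (d+1) → ℝ) = Fin.snoc (a • x) (a * y) := by
  funext i
  induction i using Fin.lastCases <;> simp

lemma snoc_combine {d : ℕ} (a a' : ℝ) (x x' : Fin d → ℝ) (y y' : ℝ) :
    a • (Fin.snoc x y : Fin (d+1) → ℝ) + a' • (Fin.snoc x' y' : Fin (d+1) → ℝ) =
      Fin.snoc (a • x + a' • x') (a * y + a' * y') := by
  funext i
  induction i using Fin.lastCases <;> simp

variable {m n q r : ℕ} (A : Matrix (Fin m) (Fin n) ℝ) (P : Matrix (Fin q) (Fin n) ℝ)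
  (Z : Matrix (Fin q) (Fin r) ℝ) (b : Fin m → ℝ)

lemma Hmat_row1 (i : Fin m) (j : Fin (q+1)) :
    Hmat b Z ((Fin.castAdd r i).castSucc) j = if (j:ℕ) = q then -b i else 0 := by
  simp only [Hmat, Fin.coe_castSucc, Fin.coe_castAdd]
  rw [dif_pos i.isLt]

lemma Hmat_row2 (k : Fin r) (j : Fin (q+1)) :
    Hmat b Z ((Fin.natAdd m k).castSucc) j = if hj : (j:ℕ) < q then Z ⟨j,hj⟩ k else 0 := by
  simp only [Hmat, Fin.coe_castSucc, Fin.coe_natAdd]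
  rw [dif_neg (by omega), dif_pos (by have := k.isLt; omega)]
  split
  · congr 1
    ext
    simp
  · rfl

lemma Hmat_row3 (j : Fin (q+1)) :
    Hmat b Z (Fin.last (m+r)) j = if (j:ℕ) = q then 1 else 0 := by
  simp only [Hmat, Fin.val_last]
  rw [dif_neg (by omega), dif_neg (by omega)]

lemma Gmat_row1 (i : Fin m) (j : Fin n) :
    Gmat A P Z ((Fin.castAdd r i).castSucc) j = A i j := by
  simp only [Gmat, Fin.coe_castSucc, Fin.coe_castAdd]
  rw [dif_pos i.isLt]

lemma Gmat_row2 (k : Fin r) (j : Fin n) :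
    Gmat A P Z ((Fin.natAdd m k).castSucc) j = -(∑ l : Fin q, Z l k * P l j) := by
  simp only [Gmat, Fin.coe_castSucc, Fin.coe_natAdd]
  rw [dif_neg (by omega), dif_pos (by have := k.isLt; omega)]
  congr 1
  apply Finset.sum_congr rfl
  intro l _
  congr 2
  ext
  simp

lemma Gmat_row3 (j : Fin n) : Gmat A P Z (Fin.last (m+r)) j = 0 := by
  simp only [Gmat, Fin.val_last]
  rw [dif_neg (by omega), dif_neg (by omega)]

end AuxBlocks

/-- first block of coordinates -/
def p1 {m r : ℕ} (u : Fin (m+r+1) → ℝ) : Fin m → ℝ :=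
  fun i => u ((Fin.castAdd r i).castSucc)

/-- second block of coordinates -/
def p2 {m r : ℕ} (u : Fin (m+r+1) → ℝ) : Fin r → ℝ :=
  fun k => u ((Fin.natAdd m k).castSucc)

lemma negHT_mulVec {m q r : ℕ} (b : Fin m → ℝ) (Z : Matrix (Fin q) (Fin r) ℝ)
    (u : Fin (m+r+1) → ℝ) :
    -((Hmat b Z)ᵀ.mulVec u) =
      Fin.snoc (-(Z.mulVec (p2 u))) (b ⬝ᵥ (p1 u) - u (Fin.last (m+r))) := by
  funext j
  rw [Pi.neg_apply, Matrix.mulVec, dotProduct]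
  simp only [transpose_apply]
  rw [Fin.sum_univ_castSucc, Fin.sum_univ_add]
  induction j using Fin.lastCases with
  | last =>
    rw [Fin.snoc_last]
    simp only [Hmat_row1, Hmat_row2, Hmat_row3, Fin.val_last, if_pos rfl,
      dif_neg (lt_irrefl q), zero_mul, Finset.sum_const_zero, one_mul, neg_mul,
      dotProduct, p1]
    simp only [if_true, neg_mul, one_mul]
    rw [Finset.sum_neg_distrib]
    ring
  | cast jj =>
    have hjj : ((jj.castSucc : Fin (q+1)) : ℕ) < q := jj.isLt
    rw [snoc_eval _ _ _ hjj]
    have hne : ¬ ((jj.castSucc : Fin (q+1)) : ℕ) = q := by omega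
    simp only [Hmat_row1, Hmat_row2, Hmat_row3, if_neg hne, dif_pos hjj, zero_mul,
      Finset.sum_const_zero, Pi.neg_apply, Matrix.mulVec, dotProduct, p2]
    have : (⟨(jj.castSucc : ℕ), hjj⟩ : Fin q) = jj := by ext; simp
    rw [this]
    ring

lemma GT_mulVec {m n q r : ℕ} (A : Matrix (Fin m) (Fin n) ℝ) (P : Matrix (Fin q) (Fin n) ℝ)
    (Z : Matrix (Fin q) (Fin r) ℝ) (u : Fin (m+r+1) → ℝ) :
    (Gmat A P Z)ᵀ.mulVec u = Aᵀ.mulVec (p1 u) - Pᵀ.mulVec (Z.mulVec (p2 u)) := by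
  funext j
  rw [Pi.sub_apply, Matrix.mulVec, dotProduct]
  simp only [transpose_apply]
  rw [Fin.sum_univ_castSucc, Fin.sum_univ_add]
  simp only [Gmat_row1, Gmat_row2, Gmat_row3, zero_mul, add_zero, neg_mul]
  rw [Finset.sum_neg_distrib]
  simp only [Matrix.mulVec, dotProduct, transpose_apply, p1, p2]
  have key : ∑ k : Fin r, (∑ l : Fin q, Z l k * P l j) * u ((Fin.natAdd m k).castSucc)
      = ∑ l : Fin q, P l j * ∑ k : Fin r, Z l k * u ((Fin.natAdd m k).castSucc) := by
    simp_rw [Finset.sum_mul, Finset.mul_sum]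
    rw [Finset.sum_comm]
    exact Finset.sum_congr rfl fun l _ => Finset.sum_congr rfl fun k _ => by ring
  rw [key]
  ring

lemma lift1_eval {q : ℕ} (d : Fin q → ℝ) (i : Fin (q+1)) (h : (i:ℕ) < q) :
    lift1 d i = d ⟨i, h⟩ := snoc_eval d 1 i h

lemma lift1_castSucc {q : ℕ} (d : Fin q → ℝ) (j : Fin q) :
    lift1 d j.castSucc = d j := by
  simp [lift1]

lemma lift1_last {q : ℕ} (d : Fin q → ℝ) : lift1 d (Fin.last q) = 1 := by
  simp [lift1]

/-- The key computation: `M (lift1 (D(u,w) - s)) = (-w, bᵀu - s_q)`. -/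
lemma Mlift_eq {m q : ℕ} (hq : 0 < q) (b : Fin m → ℝ) (cbar : Fin q → ℝ)
    (u : Fin m → ℝ) (w : Fin q → ℝ) (s : Fin q → ℝ)
    (hdot : cbar ⬝ᵥ w = 1) (hclast : cbar (lastIdx q hq) = 1)
    (hs : s ∈ RstarSet q hq) :
    Mmap hq cbar (lift1 (Dmap b (u, w) - s)) =
      Fin.snoc (-w) (b ⬝ᵥ u - s (lastIdx q hq)) := by
  set d : Fin q → ℝ := Dmap b (u, w) - s with hd
  have hdval : ∀ j : Fin q, (j : ℕ) < q - 1 → d j = w j := by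
    intro j hj
    simp only [hd, Pi.sub_apply, Dmap, if_pos hj, hs.1 j hj, sub_zero]
  have hdlast : d (lastIdx q hq) = b ⬝ᵥ u - s (lastIdx q hq) := by
    simp only [hd, Pi.sub_apply, Dmap]
    rw [if_neg (by simp [lastIdx])]
  funext i
  simp only [Mmap]
  by_cases h1 : (i : ℕ) < q - 1
  · rw [if_pos h1]
    have hiq : (i : ℕ) < q := by omega
    rw [lift1_eval d i hiq, snoc_eval _ _ i hiq, hdval _ h1]
    rfl
  · rw [if_neg h1]
    by_cases h2 : (i : ℕ) = q - 1
    · rw [if_pos h2]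
      have hiq : (i : ℕ) < q := by omega
      rw [snoc_eval _ _ i hiq, lift1_last]
      have hsum : (∑ j : Fin q, if (j : ℕ) < q - 1 then cbar j * lift1 d j.castSucc else 0)
          = 1 - w (lastIdx q hq) := by
        have step : ∀ j : Fin q, (if (j : ℕ) < q - 1 then cbar j * lift1 d j.castSucc else 0)
            = cbar j * w j - (if j = lastIdx q hq then cbar j * w j else 0) := by
          intro j
          by_cases hj : (j : ℕ) < q - 1
          · rw [if_pos hj, lift1_castSucc, hdval j hj, if_neg, sub_zero]
            intro hcon
            rw [hcon] at hj
            simp [lastIdx] at hj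
          · rw [if_neg hj, if_pos, sub_self]
            ext
            have := j.isLt
            simp only [lastIdx]
            omega
        rw [Finset.sum_congr rfl (fun j _ => step j), Finset.sum_sub_distrib,
          Finset.sum_ite_eq' Finset.univ (lastIdx q hq) (fun j => cbar j * w j)]
        have : cbar ⬝ᵥ w = ∑ j, cbar j * w j := rfl
        rw [← this, hdot, if_pos (Finset.mem_univ _), hclast, one_mul]
      rw [hsum]
      have : (⟨(i : ℕ), hiq⟩ : Fin q) = lastIdx q hq := by
        ext; simp only [lastIdx]; omega
      rw [this]
      simp
    · rw [if_neg h2]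
      have hlast : i = Fin.last q := by
        apply eq_last_of_not_lt
        omega
      rw [hlast, Fin.snoc_last, lift1_castSucc, hdlast]

section KstarChar

variable {m n q r : ℕ} (A : Matrix (Fin m) (Fin n) ℝ) (P : Matrix (Fin q) (Fin n) ℝ)
  (Z : Matrix (Fin q) (Fin r) ℝ) (b : Fin m → ℝ)

/-- explicit description of membership in `K*`. -/
def KSform (w : Fin (q+1) → ℝ) : Prop :=
  ∃ (u1 : Fin m → ℝ) (u2 : Fin r → ℝ) (t : ℝ), 0 ≤ u1 ∧ 0 ≤ u2 ∧ 0 ≤ t ∧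
    Aᵀ.mulVec u1 = Pᵀ.mulVec (Z.mulVec u2) ∧
    w = Fin.snoc (-(Z.mulVec u2)) (b ⬝ᵥ u1 - t)

lemma Kstar_mem_iff (w : Fin (q+1) → ℝ) :
    (∃ u : Fin (m+r+1) → ℝ, 0 ≤ u ∧ w = -((Hmat b Z)ᵀ.mulVec u) ∧
      (Gmat A P Z)ᵀ.mulVec u = 0) ↔ KSform A P Z b w := by
  constructor
  · rintro ⟨u, hu, hw, hG⟩
    refine ⟨p1 u, p2 u, u (Fin.last (m+r)), fun i => hu _, fun k => hu _, hu _, ?_, ?_⟩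
    · rw [GT_mulVec] at hG
      exact sub_eq_zero.mp hG
    · rw [hw, negHT_mulVec]
  · rintro ⟨u1, u2, t, h1, h2, h3, hA, hw⟩
    set u : Fin (m+r+1) → ℝ := Fin.snoc (Fin.append u1 u2) t with hu
    have hp1 : p1 u = u1 := by
      funext i; simp [p1, hu, Fin.snoc_castSucc, Fin.append_left]
    have hp2 : p2 u = u2 := by
      funext k; simp only [p2, hu, Fin.snoc_castSucc, Fin.append_right]
    have hul : u (Fin.last (m+r)) = t := by simp [hu]
    refine ⟨u, ?_, ?_, ?_⟩
    · intro i
      induction i using Fin.lastCases with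
      | last => simpa [hu] using h3
      | cast i =>
        rw [hu]
        simp only [Fin.snoc_castSucc]
        induction i using Fin.addCases with
        | left i => simpa [Fin.append_left] using h1 i
        | right i => simpa [Fin.append_right] using h2 i
    · rw [negHT_mulVec, hp1, hp2, hul, hw]
    · rw [GT_mulVec, hp1, hp2, hA, sub_self]

lemma KSform_combine {w w' : Fin (q+1) → ℝ} (a a' : ℝ) (ha : 0 ≤ a) (ha' : 0 ≤ a')
    (hw : KSform A P Z b w) (hw' : KSform A P Z b w') :
    KSform A P Z b (a • w + a' • w') := by
  obtain ⟨u1, u2, t, h1, h2, h3, hA, rfl⟩ := hw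
  obtain ⟨u1', u2', t', h1', h2', h3', hA', rfl⟩ := hw'
  refine ⟨a • u1 + a' • u1', a • u2 + a' • u2', a * t + a' * t',
    by positivity, by positivity, by positivity, ?_, ?_⟩
  · rw [Matrix.mulVec_add, Matrix.mulVec_smul, Matrix.mulVec_smul, hA, hA',
      Matrix.mulVec_add, Matrix.mulVec_smul, Matrix.mulVec_smul, Matrix.mulVec_add,
      Matrix.mulVec_smul, Matrix.mulVec_smul]
  · have c1 : a • (-(Z.mulVec u2)) + a' • (-(Z.mulVec u2')) =
        -(Z.mulVec (a • u2 + a' • u2')) := by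
      rw [Matrix.mulVec_add, Matrix.mulVec_smul, Matrix.mulVec_smul]
      module
    have c2 : a * (b ⬝ᵥ u1 - t) + a' * (b ⬝ᵥ u1' - t') =
        b ⬝ᵥ (a • u1 + a' • u1') - (a * t + a' * t') := by
      rw [dotProduct_add, dotProduct_smul, dotProduct_smul,
        smul_eq_mul, smul_eq_mul]
      ring
    rw [snoc_combine, c1, c2]

lemma KSform_smul {w : Fin (q+1) → ℝ} (a : ℝ) (ha : 0 ≤ a) (hw : KSform A P Z b w) :
    KSform A P Z b (a • w) := by
  have := KSform_combine A P Z b a 0 ha le_rfl hw hw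
  simpa using this

lemma Kstar_isClosed :
    IsClosed {w : Fin (q+1) → ℝ | ∃ u : Fin (m+r+1) → ℝ, 0 ≤ u ∧
      w = -((Hmat b Z)ᵀ.mulVec u) ∧ (Gmat A P Z)ᵀ.mulVec u = 0} := by
  set Mbig : Matrix (Fin (q+1+n)) (Fin (m+r+1)) ℝ := fun j i =>
    if h : (j : ℕ) < q+1 then -(Hmat b Z) i ⟨j, h⟩
    else Gmat A P Z i ⟨(j : ℕ) - (q+1), by have := j.isLt; omega⟩ with hMbig
  set ι : (Fin (q+1) → ℝ) → (Fin (q+1+n) → ℝ) := fun w j =>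
    if h : (j : ℕ) < q+1 then w ⟨j, h⟩ else 0 with hι
  have hmv : ∀ (u : Fin (m+r+1) → ℝ) (j : Fin (q+1+n)),
      Mbig.mulVec u j = if h : (j : ℕ) < q+1 then (-((Hmat b Z)ᵀ.mulVec u)) ⟨j, h⟩
        else ((Gmat A P Z)ᵀ.mulVec u) ⟨(j : ℕ) - (q+1), by have := j.isLt; omega⟩ := by
    intro u j
    by_cases h : (j : ℕ) < q+1
    · rw [dif_pos h]
      simp only [Matrix.mulVec, dotProduct, transpose_apply, Pi.neg_apply, hMbig,
        dif_pos h, neg_mul]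
      rw [Finset.sum_neg_distrib]
    · rw [dif_neg h]
      simp only [Matrix.mulVec, dotProduct, transpose_apply, hMbig, dif_neg h]
  have main : {w : Fin (q+1) → ℝ | ∃ u : Fin (m+r+1) → ℝ, 0 ≤ u ∧
      w = -((Hmat b Z)ᵀ.mulVec u) ∧ (Gmat A P Z)ᵀ.mulVec u = 0} =
      ι ⁻¹' {y : Fin (q+1+n) → ℝ | ∃ u, 0 ≤ u ∧ y = Mbig.mulVec u} := by
    ext w
    simp only [Set.mem_setOf_eq, Set.mem_preimage]
    constructor
    · rintro ⟨u, hu, hw, hG⟩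
      refine ⟨u, hu, ?_⟩
      funext j
      rw [hmv u j]
      by_cases h : (j : ℕ) < q+1
      · rw [dif_pos h]
        simp only [hι, dif_pos h]
        rw [hw]
      · rw [dif_neg h]
        simp only [hι, dif_neg h]
        rw [hG]
        rfl
    · rintro ⟨u, hu, hEq⟩
      refine ⟨u, hu, ?_, ?_⟩
      · funext jj
        have h : ((⟨(jj : ℕ), by have := jj.isLt; omega⟩ : Fin (q+1+n)) : ℕ) < q+1 :=
          jj.isLt
        have := congrFun hEq ⟨(jj : ℕ), by have := jj.isLt; omega⟩
        rw [hmv] at this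
        simp only [hι, dif_pos h] at this
        simpa using this
      · funext jj
        have h : ¬ ((⟨q+1+(jj : ℕ), by have := jj.isLt; omega⟩ : Fin (q+1+n)) : ℕ) < q+1 := by
          simp only [Fin.val_mk, not_lt]; omega
        have := congrFun hEq ⟨q+1+(jj : ℕ), by have := jj.isLt; omega⟩
        rw [hmv] at this
        simp only [hι, dif_neg h] at this
        have h2 : q+1+(jj : ℕ) - (q+1) = (jj : ℕ) := by omega
        rw [Pi.zero_apply]
        convert this.symm using 2
        ext
        simp [h2]
  rw [main]
  apply IsClosed.preimage
  · apply continuous_pi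
    intro j
    simp only [hι]
    by_cases h : (j : ℕ) < q+1
    · simp only [dif_pos h]
      exact continuous_apply _
    · simp only [dif_neg h]
      exact continuous_const
  · exact isClosed_mulVec_orthant Mbig

end KstarChar

lemma snoc_add {d : ℕ} (x x' : Fin d → ℝ) (y y' : ℝ) :
    (Fin.snoc x y : Fin (d+1) → ℝ) + (Fin.snoc x' y' : Fin (d+1) → ℝ) =
      Fin.snoc (x + x') (y + y') := by
  funext i
  induction i using Fin.lastCases <;> simp

/-- `K* = cl cone (M[𝒟 × {1}])`. -/
theorem stmt3
    (m n q r : ℕ) (hm : 0 < m) (hn : 0 < n) (hq : 0 < q) (hr : 0 < r)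
    (A : Matrix (Fin m) (Fin n) ℝ) (P : Matrix (Fin q) (Fin n) ℝ)
    (Z : Matrix (Fin q) (Fin r) ℝ) (b : Fin m → ℝ)
    (C : Set (Fin q → ℝ)) (hC : C = {y | 0 ≤ Zᵀ.mulVec y})
    (hCpointed : C ∩ -C = {0}) (hCnontriv : C ≠ {0})
    (S : Set (Fin n → ℝ)) (hS : S = {x | b ≤ A.mulVec x}) (hSne : S.Nonempty)
    (cbar : Fin q → ℝ) (hcbar : cbar ∈ intrinsicInterior ℝ C)
    (hcq : cbar (lastIdx q hq) = 1)
    (T : Set ((Fin m → ℝ) × (Fin q → ℝ))) (hT : T = Tset A P Z cbar) (hTne : T.Nonempty)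
    (LowImg : Set (Fin q → ℝ)) (hLow : LowImg = Dmap b '' T - RstarSet q hq)
    (Kstar : Set (Fin (q + 1) → ℝ))
    (hKstar : Kstar = {w | ∃ u : Fin (m + r + 1) → ℝ, 0 ≤ u ∧
      w = -((Hmat b Z)ᵀ.mulVec u) ∧ (Gmat A P Z)ᵀ.mulVec u = 0}) :
    Kstar = closure (coneOf ((fun d => Mmap hq cbar (lift1 d)) '' LowImg)) := by
  subst hC hS hT hLow hKstar
  have hcC : 0 ≤ Zᵀ.mulVec cbar := intrinsicInterior_subset hcbar
  set B : Set (Fin (q+1) → ℝ) :=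
    (fun d => Mmap hq cbar (lift1 d)) '' (Dmap b '' Tset A P Z cbar - RstarSet q hq) with hB
  -- B is contained in the K* description
  have hBsub : ∀ x ∈ B, KSform A P Z b x := by
    rintro x ⟨dd, hdd, rfl⟩
    rw [Set.mem_sub] at hdd
    obtain ⟨dv, hdv, s, hsR, rfl⟩ := hdd
    obtain ⟨⟨u, w0⟩, hTmem, rfl⟩ := hdv
    obtain ⟨v, hv0, hw0, hAu, hcw, hu0⟩ := hTmem
    dsimp only at hw0 hAu hcw hu0
    show KSform A P Z b (Mmap hq cbar (lift1 (Dmap b (u, w0) - s)))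
    rw [Mlift_eq hq b cbar u w0 s hcw hcq hsR]
    exact ⟨u, v, s (lastIdx q hq), hu0, hv0, hsR.2,
      by rw [← hw0]; exact hAu, by rw [hw0]⟩
  have hKconv : Convex ℝ {w : Fin (q+1) → ℝ | KSform A P Z b w} := by
    intro x hx y hy a a' ha ha' _
    exact KSform_combine A P Z b a a' ha ha' hx hy
  have hconeSub : coneOf B ⊆ {w : Fin (q+1) → ℝ | KSform A P Z b w} := by
    rintro y ⟨l, hl, x, hx, rfl⟩
    exact KSform_smul A P Z b l hl (convexHull_min hBsub hKconv hx)
  apply Set.Subset.antisymm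
  · -- K* ⊆ closure (cone B)
    intro w hw
    obtain ⟨u1, u2, t, h1, h2, h3, hAeq, rfl⟩ := (Kstar_mem_iff A P Z b w).mp hw
    set γ : ℝ := cbar ⬝ᵥ (Z.mulVec u2) with hγ
    have hγrw : γ = (Zᵀ.mulVec cbar) ⬝ᵥ u2 := by
      simp only [hγ, dotProduct, Matrix.mulVec, transpose_apply]
      simp_rw [Finset.mul_sum, Finset.sum_mul]
      rw [Finset.sum_comm]
      exact Finset.sum_congr rfl fun j _ => Finset.sum_congr rfl fun k _ => by ring
    have hγ0 : 0 ≤ γ := by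
      rw [hγrw]
      exact Finset.sum_nonneg fun k _ => mul_nonneg (hcC k) (h2 k)
    rcases eq_or_lt_of_le hγ0 with hγeq | hγpos
    · -- γ = 0 : recession direction, approximate
      obtain ⟨⟨u0, w0⟩, hT0⟩ := hTne
      obtain ⟨v0, hv00, hw0, hA0, hc0, hu00⟩ := hT0
      set e : Fin (q+1) → ℝ := Fin.snoc (-w0) (b ⬝ᵥ u0) with he
      set wfix : Fin (q+1) → ℝ := Fin.snoc (-(Z.mulVec u2)) (b ⬝ᵥ u1 - t) with hwfix
      have key : ∀ ν : ℕ, ((ν:ℝ)+1)⁻¹ • e + wfix ∈ coneOf B := by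
        intro ν
        set lam : ℝ := (ν:ℝ)+1 with hlam
        have hlam0 : 0 < lam := by positivity
        have hTm : (u0 + lam • u1, w0 + lam • Z.mulVec u2) ∈ Tset A P Z cbar := by
          refine ⟨v0 + lam • u2, ?_, ?_, ?_, ?_, ?_⟩
          · intro k
            show 0 ≤ v0 k + lam * u2 k
            exact add_nonneg (hv00 k) (mul_nonneg hlam0.le (h2 k))
          · rw [Matrix.mulVec_add, Matrix.mulVec_smul, ← hw0]
          · show Aᵀ.mulVec (u0 + lam • u1) = Pᵀ.mulVec (w0 + lam • Z.mulVec u2)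
            rw [Matrix.mulVec_add, Matrix.mulVec_smul, Matrix.mulVec_add,
              Matrix.mulVec_smul, hA0, hAeq]
          · show cbar ⬝ᵥ (w0 + lam • Z.mulVec u2) = 1
            rw [dotProduct_add, dotProduct_smul, smul_eq_mul, ← hγ, ← hγeq,
              hc0]
            ring
          · intro i
            show 0 ≤ u0 i + lam * u1 i
            exact add_nonneg (hu00 i) (mul_nonneg hlam0.le (h1 i))
        set s : Fin q → ℝ := fun i => if (i:ℕ) < q - 1 then 0 else lam * t with hs
        have hsR : s ∈ RstarSet q hq := by
          constructor
          · intro i hi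
            simp only [hs, if_pos hi]
          · show (0:ℝ) ≤ (if ((lastIdx q hq : Fin q) : ℕ) < q - 1 then 0 else lam * t)
            rw [if_neg (by show ¬ (q - 1 < q - 1); omega)]
            exact mul_nonneg hlam0.le h3
        have hd : Dmap b (u0 + lam • u1, w0 + lam • Z.mulVec u2) - s ∈
            Dmap b '' Tset A P Z cbar - RstarSet q hq :=
          Set.sub_mem_sub (Set.mem_image_of_mem _ hTm) hsR
        have hxB : Mmap hq cbar (lift1 (Dmap b (u0 + lam • u1, w0 + lam • Z.mulVec u2) - s))
            ∈ B := Set.mem_image_of_mem _ hd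
        have hdot : cbar ⬝ᵥ (w0 + lam • Z.mulVec u2) = 1 := by
          rw [dotProduct_add, dotProduct_smul, smul_eq_mul, ← hγ, ← hγeq, hc0]
          ring
        have hx := Mlift_eq hq b cbar (u0 + lam • u1) (w0 + lam • Z.mulVec u2) s hdot hcq hsR
        have hslast : s (lastIdx q hq) = lam * t := by
          show (if ((lastIdx q hq : Fin q) : ℕ) < q - 1 then (0:ℝ) else lam * t) = lam * t
          rw [if_neg (by show ¬ (q - 1 < q - 1); omega)]
        have hxe : Mmap hq cbar (lift1 (Dmap b (u0 + lam • u1, w0 + lam • Z.mulVec u2) - s))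
            = e + lam • wfix := by
          have c1 : -(w0 + lam • Z.mulVec u2) = -w0 + lam • (-(Z.mulVec u2)) := by
            funext j
            simp only [Pi.add_apply, Pi.neg_apply, Pi.smul_apply, smul_eq_mul]
            ring
          have c2 : b ⬝ᵥ (u0 + lam • u1) - lam * t = b ⬝ᵥ u0 + lam * (b ⬝ᵥ u1 - t) := by
            rw [dotProduct_add, dotProduct_smul, smul_eq_mul]
            ring
          rw [hx, hslast, he, hwfix, smul_snoc, snoc_add, c1, c2]
        refine ⟨lam⁻¹, inv_nonneg.mpr hlam0.le,
          Mmap hq cbar (lift1 (Dmap b (u0 + lam • u1, w0 + lam • Z.mulVec u2) - s)),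
          subset_convexHull ℝ B hxB, ?_⟩
        rw [hxe, smul_add, smul_smul, inv_mul_cancel₀ hlam0.ne', one_smul]
      have hten : Filter.Tendsto (fun ν : ℕ => ((ν:ℝ)+1)⁻¹ • e + wfix)
          Filter.atTop (nhds wfix) := by
        have h0 : Filter.Tendsto (fun ν : ℕ => ((ν:ℝ)+1)⁻¹) Filter.atTop (nhds (0:ℝ)) := by
          simpa [one_div] using (tendsto_one_div_add_atTop_nhds_zero_nat :
              Filter.Tendsto (fun n : ℕ => 1 / ((n : ℝ) + 1)) Filter.atTop (nhds 0))
        have := (h0.smul_const e).add_const wfix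
        simpa using this
      exact mem_closure_of_tendsto hten (Filter.Eventually.of_forall key)
    · -- γ > 0 : direct membership
      have hne : γ ≠ 0 := hγpos.ne'
      set s : Fin q → ℝ := fun i => if (i:ℕ) < q - 1 then 0 else γ⁻¹ * t with hs
      have hsR : s ∈ RstarSet q hq := by
        constructor
        · intro i hi
          simp only [hs, if_pos hi]
        · show (0:ℝ) ≤ (if ((lastIdx q hq : Fin q) : ℕ) < q - 1 then 0 else γ⁻¹ * t)
          rw [if_neg (by show ¬ (q - 1 < q - 1); omega)]
          exact mul_nonneg (inv_nonneg.mpr hγ0) h3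
      have hTm : (γ⁻¹ • u1, γ⁻¹ • Z.mulVec u2) ∈ Tset A P Z cbar := by
        refine ⟨γ⁻¹ • u2, ?_, ?_, ?_, ?_, ?_⟩
        · intro k
          show 0 ≤ γ⁻¹ * u2 k
          exact mul_nonneg (inv_nonneg.mpr hγ0) (h2 k)
        · rw [Matrix.mulVec_smul]
        · show Aᵀ.mulVec (γ⁻¹ • u1) = Pᵀ.mulVec (γ⁻¹ • Z.mulVec u2)
          rw [Matrix.mulVec_smul, Matrix.mulVec_smul, hAeq]
        · show cbar ⬝ᵥ (γ⁻¹ • Z.mulVec u2) = 1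
          rw [dotProduct_smul, smul_eq_mul, ← hγ, inv_mul_cancel₀ hne]
        · intro i
          show 0 ≤ γ⁻¹ * u1 i
          exact mul_nonneg (inv_nonneg.mpr hγ0) (h1 i)
      have hd : Dmap b (γ⁻¹ • u1, γ⁻¹ • Z.mulVec u2) - s ∈
          Dmap b '' Tset A P Z cbar - RstarSet q hq :=
        Set.sub_mem_sub (Set.mem_image_of_mem _ hTm) hsR
      have hxB : Mmap hq cbar (lift1 (Dmap b (γ⁻¹ • u1, γ⁻¹ • Z.mulVec u2) - s)) ∈ B :=
        Set.mem_image_of_mem _ hd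
      have hdot : cbar ⬝ᵥ (γ⁻¹ • Z.mulVec u2) = 1 := by
        rw [dotProduct_smul, smul_eq_mul, ← hγ, inv_mul_cancel₀ hne]
      have hx := Mlift_eq hq b cbar (γ⁻¹ • u1) (γ⁻¹ • Z.mulVec u2) s hdot hcq hsR
      have hslast : s (lastIdx q hq) = γ⁻¹ * t := by
        show (if ((lastIdx q hq : Fin q) : ℕ) < q - 1 then (0:ℝ) else γ⁻¹ * t) = γ⁻¹ * t
        rw [if_neg (by show ¬ (q - 1 < q - 1); omega)]
      apply subset_closure
      refine ⟨γ, hγ0, _, subset_convexHull ℝ B hxB, ?_⟩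
      rw [hx, hslast, smul_snoc]
      have c1 : γ • (-(γ⁻¹ • Z.mulVec u2)) = -(Z.mulVec u2) := by
        rw [smul_neg, smul_smul, mul_inv_cancel₀ hne, one_smul]
      have c2 : γ * (b ⬝ᵥ (γ⁻¹ • u1) - γ⁻¹ * t) = b ⬝ᵥ u1 - t := by
        rw [dotProduct_smul, smul_eq_mul]
        field_simp
      rw [c1, c2]
  · -- closure (cone B) ⊆ K*
    apply closure_minimal
    · intro x hx
      exact (Kstar_mem_iff A P Z b x).mpr (hconeSub hx)
    · exact Kstar_isClosed A P Z b
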